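/- Let $\Pi$ be a L\'evy measure supported on the unit ball of $\mathbb{R}^d$ with $V(t) = \sup_{|z|\le 1}\int_{|y|\le t}\langle y,z\rangle^2\,\Pi(dy) > 0$ for all $t>0$. Then for every $\delta > 0$, $\int_{|y| \le 1} \frac{|y|^2}{V(|y|)\,(\log_+(1/V(|y|)))^{1+\delta}}\,\Pi(dy) < \infty$, where $\log_+(x) = \max(1, \log x)$. -/

import Mathlib

open MeasureTheory Set
open scoped ENNReal

private lemma key_real (δ : ℝ) (hδ : 0 < δ) (a v c L' : ℝ) (ha : 0 ≤ a) (hc : 0 < c)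
    (hv : c ≤ v) (hL' : 1 ≤ L') (hL : L' ≤ max 1 (Real.log (1 / v))) :
    a / (v * (max 1 (Real.log (1 / v))) ^ (1 + δ)) ≤ (c⁻¹ / L' ^ (1 + δ)) * a := by
  have hv0 : 0 < v := lt_of_lt_of_le hc hv
  set L := max 1 (Real.log (1 / v)) with hLdef
  have hL1 : (1 : ℝ) ≤ L := le_max_left _ _
  have hL'0 : (0 : ℝ) < L' := lt_of_lt_of_le one_pos hL'
  have hpow : L' ^ (1 + δ) ≤ L ^ (1 + δ) := Real.rpow_le_rpow (by linarith) hL (by linarith)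
  have hL'pow : 0 < L' ^ (1 + δ) := Real.rpow_pos_of_pos hL'0 _
  have hden : 0 < c * L' ^ (1 + δ) := mul_pos hc hL'pow
  have h1 : a / (v * L ^ (1 + δ)) ≤ a / (c * L' ^ (1 + δ)) := by
    apply div_le_div_of_nonneg_left ha hden
    exact mul_le_mul hv hpow (le_of_lt hL'pow) (le_of_lt hv0)
  calc a / (v * L ^ (1 + δ)) ≤ a / (c * L' ^ (1 + δ)) := h1
    _ = (c⁻¹ / L' ^ (1 + δ)) * a := by field_simp

theorem stmt5 {d : ℕ} (μ : Measure (EuclideanSpace ℝ (Fin d)))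
    (h0 : μ {0} = 0)
    (hsupp : μ {y : EuclideanSpace ℝ (Fin d) | 1 < ‖y‖} = 0)
    (hint : (∫⁻ y in {y : EuclideanSpace ℝ (Fin d) | ‖y‖ ≤ 1},
        ENNReal.ofReal (‖y‖ ^ 2) ∂μ) < ⊤)
    (V : ℝ → ℝ)
    (hV : ∀ t : ℝ, ENNReal.ofReal (V t) =
      ⨆ z ∈ {z : EuclideanSpace ℝ (Fin d) | ‖z‖ ≤ 1},
        ∫⁻ y in {y : EuclideanSpace ℝ (Fin d) | ‖y‖ ≤ t},
          ENNReal.ofReal ((inner ℝ y z : ℝ) ^ 2) ∂μ)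
    (hVpos : ∀ t : ℝ, 0 < t → 0 < V t)
    (δ : ℝ) (hδ : 0 < δ) :
    (∫⁻ y in {y : EuclideanSpace ℝ (Fin d) | ‖y‖ ≤ 1},
      ENNReal.ofReal (‖y‖ ^ 2 /
        (V ‖y‖ * (max 1 (Real.log (1 / V ‖y‖))) ^ (1 + δ))) ∂μ) < ⊤ := by
  classical
  -- dispose of d = 0
  rcases Nat.eq_zero_or_pos d with rfl | hdpos
  · exfalso
    have h3 : ENNReal.ofReal (V 1) = 0 := by
      rw [hV 1]
      refine le_antisymm (iSup₂_le fun z hz => ?_) zero_le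
      have hz0 : z = (0 : EuclideanSpace ℝ (Fin 0)) := by
        have : ‖z‖ = 0 := by rw [EuclideanSpace.norm_eq]; simp
        exact norm_eq_zero.mp this
      subst hz0
      simp [inner_zero_right]
    rw [ENNReal.ofReal_eq_zero] at h3
    have := hVpos 1 one_pos
    linarith
  have hd1 : (1 : ℝ) ≤ (d : ℝ) := by exact_mod_cast hdpos
  have hd0 : (0 : ℝ) < (d : ℝ) := by linarith
  set g : EuclideanSpace ℝ (Fin d) → ℝ≥0∞ := fun y => ENNReal.ofReal (‖y‖ ^ 2) with hg
  have hgmeas : Measurable g := ENNReal.measurable_ofReal.comp (continuous_norm.pow 2).measurable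
  have hSmeas : ∀ t : ℝ, MeasurableSet {y : EuclideanSpace ℝ (Fin d) | ‖y‖ ≤ t} :=
    fun t => measurableSet_le continuous_norm.measurable measurable_const
  set W : ℝ → ℝ≥0∞ := fun t => μ.withDensity g {y | ‖y‖ ≤ t} with hWdef
  have hWint : ∀ t, W t = ∫⁻ y in {y : EuclideanSpace ℝ (Fin d) | ‖y‖ ≤ t}, g y ∂μ :=
    fun t => withDensity_apply g (hSmeas t)
  have hWmono : Monotone W := fun a b hab => measure_mono (fun y hy => le_trans hy hab)
  have hWmeas : Measurable W := hWmono.measurable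
  have hW1 : W 1 < ⊤ := by rw [hWint]; exact hint
  have hW0 : W 0 = 0 := by
    have hS0 : {y : EuclideanSpace ℝ (Fin d) | ‖y‖ ≤ 0} = {0} := by
      ext y; simp [norm_le_zero_iff]
    rw [hWdef]
    simp only [hS0]
    rw [withDensity_apply g (measurableSet_singleton 0), Measure.restrict_eq_zero.mpr h0,
      lintegral_zero_measure]
  have hVleW : ∀ t, ENNReal.ofReal (V t) ≤ W t := by
    intro t
    rw [hV t, hWint t]
    refine iSup₂_le fun z hz => lintegral_mono fun y => ?_
    apply ENNReal.ofReal_le_ofReal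
    have h1 := abs_real_inner_le_norm y z
    have h2 : ‖z‖ ≤ 1 := hz
    rw [← sq_abs]
    have h3 : |(inner ℝ y z : ℝ)| ≤ ‖y‖ := h1.trans (by nlinarith [norm_nonneg y])
    exact pow_le_pow_left₀ (abs_nonneg _) h3 2
  have hWled : ∀ t, W t ≤ (d : ℝ≥0∞) * ENNReal.ofReal (V t) := by
    intro t
    rw [hWint t]
    have hnorm : ∀ y : EuclideanSpace ℝ (Fin d),
        g y = ∑ i : Fin d, ENNReal.ofReal ((inner ℝ y (EuclideanSpace.single i (1:ℝ)) : ℝ) ^ 2) := by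
      intro y
      have h1 : ‖y‖ ^ 2 = ∑ i, (y i) ^ 2 := by
        rw [EuclideanSpace.norm_eq, Real.sq_sqrt (Finset.sum_nonneg fun i _ => by positivity)]
        exact Finset.sum_congr rfl fun i _ => by rw [Real.norm_eq_abs, sq_abs]
      rw [hg]
      simp only [h1]
      rw [ENNReal.ofReal_sum_of_nonneg (fun i _ => sq_nonneg _)]
      refine Finset.sum_congr rfl fun i _ => ?_
      congr 1
      rw [EuclideanSpace.inner_single_right]
      simp
    calc (∫⁻ y in {y : EuclideanSpace ℝ (Fin d) | ‖y‖ ≤ t}, g y ∂μ)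
        = ∑ i : Fin d, ∫⁻ y in {y : EuclideanSpace ℝ (Fin d) | ‖y‖ ≤ t},
            ENNReal.ofReal ((inner ℝ y (EuclideanSpace.single i (1:ℝ)) : ℝ) ^ 2) ∂μ := by
          simp only [hnorm]
          refine lintegral_finset_sum' _ fun i _ => ?_
          exact (ENNReal.measurable_ofReal.comp
            (((Continuous.inner continuous_id continuous_const).pow 2).measurable)).aemeasurable
      _ ≤ ∑ i : Fin d, ENNReal.ofReal (V t) := by
          refine Finset.sum_le_sum fun i _ => ?_
          rw [hV t]
          refine le_iSup₂_of_le (EuclideanSpace.single i (1:ℝ)) ?_ le_rfl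
          show ‖EuclideanSpace.single i (1:ℝ)‖ ≤ 1
          rw [EuclideanSpace.norm_single]; norm_num
      _ = (d : ℝ≥0∞) * ENNReal.ofReal (V t) := by
          rw [Finset.sum_const, Finset.card_univ, Fintype.card_fin, nsmul_eq_mul]
  have hWpos : ∀ y : EuclideanSpace ℝ (Fin d), y ≠ 0 → 0 < W ‖y‖ := by
    intro y hy
    exact lt_of_lt_of_le (ENNReal.ofReal_pos.mpr (hVpos _ (norm_pos_iff.mpr hy))) (hVleW _)
  -- the key measure bound
  have haux : ∀ ε : ℝ≥0∞,
      μ.withDensity g {y | ‖y‖ ≤ 1 ∧ W ‖y‖ ≤ ε} ≤ ε := by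
    intro ε
    set J : Set ℝ := {t | t ≤ 1 ∧ W t ≤ ε} with hJ
    have hJ0 : (0 : ℝ) ∈ J := ⟨zero_le_one, by rw [hW0]; exact zero_le⟩
    have hJbdd : BddAbove J := ⟨1, fun t ht => ht.1⟩
    set s := sSup J with hs
    have hmemS : ∀ y : EuclideanSpace ℝ (Fin d), ‖y‖ ≤ 1 → W ‖y‖ ≤ ε → ‖y‖ ≤ s :=
      fun y h1 h2 => le_csSup hJbdd ⟨h1, h2⟩
    by_cases hws : W s ≤ ε
    · calc μ.withDensity g {y | ‖y‖ ≤ 1 ∧ W ‖y‖ ≤ ε}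
          ≤ μ.withDensity g {y | ‖y‖ ≤ s} := measure_mono (fun y hy => hmemS y hy.1 hy.2)
        _ = W s := rfl
        _ ≤ ε := hws
    · have hlt : ∀ y : EuclideanSpace ℝ (Fin d), ‖y‖ ≤ 1 → W ‖y‖ ≤ ε → ‖y‖ < s := by
        intro y h1 h2
        refine lt_of_le_of_ne (hmemS y h1 h2) fun h => hws ?_
        rw [← h]; exact h2
      have hcover : {y : EuclideanSpace ℝ (Fin d) | ‖y‖ ≤ 1 ∧ W ‖y‖ ≤ ε} ⊆
          ⋃ k : ℕ, {y | ‖y‖ ≤ s - 1 / (k + 1)} := by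
        intro y hy
        obtain ⟨k, hk⟩ := exists_nat_one_div_lt (sub_pos.mpr (hlt y hy.1 hy.2))
        exact mem_iUnion.mpr ⟨k, by simp only [mem_setOf_eq]; linarith⟩
      have hdir : Directed (· ⊆ ·) (fun k : ℕ => {y : EuclideanSpace ℝ (Fin d) | ‖y‖ ≤ s - 1 / (k + 1)}) := by
        apply Monotone.directed_le
        intro a b hab y hy
        have : s - 1 / (a + 1 : ℝ) ≤ s - 1 / (b + 1 : ℝ) := by
          have hba : ((a : ℝ) + 1) ≤ (b : ℝ) + 1 := by
            have : (a : ℝ) ≤ (b : ℝ) := Nat.cast_le.mpr hab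
            linarith
          have : (1 : ℝ) / (b + 1) ≤ 1 / (a + 1) :=
            one_div_le_one_div_of_le (by positivity) hba
          linarith
        exact le_trans hy this
      calc μ.withDensity g {y | ‖y‖ ≤ 1 ∧ W ‖y‖ ≤ ε}
          ≤ μ.withDensity g (⋃ k : ℕ, {y | ‖y‖ ≤ s - 1 / (k + 1)}) := measure_mono hcover
        _ = ⨆ k : ℕ, W (s - 1 / (k + 1)) := hdir.measure_iUnion
        _ ≤ ε := by
            refine iSup_le fun k => ?_
            have hks : s - 1 / (k + 1 : ℝ) < s := by
              have : (0 : ℝ) < 1 / (k + 1) := by positivity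
              linarith
            obtain ⟨t, htJ, hlt'⟩ := exists_lt_of_lt_csSup ⟨0, hJ0⟩ hks
            exact le_trans (hWmono (le_of_lt hlt')) htJ.2
  -- the dyadic pieces
  set Eset : ℕ → Set (EuclideanSpace ℝ (Fin d)) := fun n =>
    Nat.casesOn n ({y | ‖y‖ ≤ 1 ∧ 1 < W ‖y‖} ∪ {0})
      (fun m => {y | ‖y‖ ≤ 1 ∧ (ENNReal.ofReal (((2:ℝ) ^ (m+1))⁻¹) < W ‖y‖ ∧
        W ‖y‖ ≤ ENNReal.ofReal (((2:ℝ) ^ m)⁻¹))}) with hEdef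
  have hWnormmeas : Measurable (fun y : EuclideanSpace ℝ (Fin d) => W ‖y‖) :=
    hWmeas.comp continuous_norm.measurable
  have hEmeas : ∀ n, MeasurableSet (Eset n) := by
    intro n
    cases n with
    | zero =>
      exact ((measurableSet_le continuous_norm.measurable measurable_const).inter
        (hWnormmeas measurableSet_Ioi)).union (measurableSet_singleton 0)
    | succ m =>
      exact (measurableSet_le continuous_norm.measurable measurable_const).inter
        (hWnormmeas measurableSet_Ioc)
  have hpow2 : ∀ k : ℕ, ENNReal.ofReal (((2:ℝ) ^ k)⁻¹) = (2 : ℝ≥0∞)⁻¹ ^ k := by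
    intro k
    rw [ENNReal.ofReal_inv_of_pos (by positivity), ENNReal.ofReal_pow (by norm_num),
      ENNReal.inv_pow]
    norm_num
  -- coverage
  have hcover : {y : EuclideanSpace ℝ (Fin d) | ‖y‖ ≤ 1} ⊆ ⋃ n, Eset n := by
    intro y hy
    have hy1 : ‖y‖ ≤ 1 := hy
    by_cases hy0 : y = 0
    · exact mem_iUnion.mpr ⟨0, Or.inr (by simp [hy0])⟩
    have hpos := hWpos y hy0
    by_cases h1 : 1 < W ‖y‖
    · exact mem_iUnion.mpr ⟨0, Or.inl ⟨hy1, h1⟩⟩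
    push_neg at h1
    have hex : ∃ n : ℕ, ENNReal.ofReal (((2:ℝ) ^ (n+1))⁻¹) < W ‖y‖ := by
      obtain ⟨k, hk⟩ := ENNReal.exists_inv_two_pow_lt hpos.ne'
      refine ⟨k, ?_⟩
      rw [hpow2]
      refine lt_of_le_of_lt ?_ hk
      rw [pow_succ]
      calc (2:ℝ≥0∞)⁻¹ ^ k * 2⁻¹ ≤ 2⁻¹ ^ k * 1 := by gcongr; norm_num
        _ = 2⁻¹ ^ k := mul_one _
    set n := Nat.find hex with hn
    have hn1 := Nat.find_spec hex
    refine mem_iUnion.mpr ⟨n + 1, ⟨hy1, hn1, ?_⟩⟩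
    cases hn2 : n with
    | zero =>
      simpa using h1
    | succ m =>
      have := Nat.find_min hex (by omega : m < n)
      simpa using not_lt.mp this
  -- the bounding sequence
  set u : ℕ → ℝ := fun n =>
    Nat.casesOn n ((d : ℝ) * (W 1).toReal)
      (fun m => 2 * (d : ℝ) / (max 1 ((m : ℝ) * Real.log 2)) ^ (1 + δ)) with hudef
  have hu0 : ∀ n, 0 ≤ u n := by
    intro n
    cases n with
    | zero => exact mul_nonneg (by positivity) ENNReal.toReal_nonneg
    | succ m =>
      apply div_nonneg (by positivity)
      exact Real.rpow_nonneg (le_trans zero_le_one (le_max_left _ _)) _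
  -- pointwise bound constant per piece
  have key : ∀ (y : EuclideanSpace ℝ (Fin d)) (c L' : ℝ), 0 < c → c ≤ V ‖y‖ →
      1 ≤ L' → L' ≤ max 1 (Real.log (1 / V ‖y‖)) →
      ENNReal.ofReal (‖y‖ ^ 2 / (V ‖y‖ * (max 1 (Real.log (1 / V ‖y‖))) ^ (1 + δ)))
        ≤ ENNReal.ofReal (c⁻¹ / L' ^ (1 + δ)) * g y := by
    intro y c L' hc hcv hL'1 hL'le
    have h := key_real δ hδ (‖y‖ ^ 2) (V ‖y‖) c L' (sq_nonneg _) hc hcv hL'1 hL'le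
    calc ENNReal.ofReal (‖y‖ ^ 2 / (V ‖y‖ * (max 1 (Real.log (1 / V ‖y‖))) ^ (1 + δ)))
        ≤ ENNReal.ofReal ((c⁻¹ / L' ^ (1 + δ)) * ‖y‖ ^ 2) := ENNReal.ofReal_le_ofReal h
      _ = ENNReal.ofReal (c⁻¹ / L' ^ (1 + δ)) * g y := by
          rw [ENNReal.ofReal_mul]
          positivity
  -- per-piece integral bounds
  have hterm : ∀ n, (∫⁻ y in Eset n,
      ENNReal.ofReal (‖y‖ ^ 2 /
        (V ‖y‖ * (max 1 (Real.log (1 / V ‖y‖))) ^ (1 + δ))) ∂μ) ≤ ENNReal.ofReal (u n) := by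
    intro n
    cases n with
    | zero =>
      have hptw : ∀ y ∈ Eset 0,
          ENNReal.ofReal (‖y‖ ^ 2 / (V ‖y‖ * (max 1 (Real.log (1 / V ‖y‖))) ^ (1 + δ)))
            ≤ ENNReal.ofReal ((d : ℝ)) * g y := by
        intro y hy
        rcases hy with ⟨hy1, hy2⟩ | hy0
        · -- 1 < W ‖y‖
          have hy0 : y ≠ 0 := by
            intro h; rw [h] at hy2; simp only [norm_zero] at hy2
            rw [hW0] at hy2; exact absurd hy2 (by simp)
          have hv := hVpos _ (norm_pos_iff.mpr hy0)
          have h2 : (1 : ℝ≥0∞) < ENNReal.ofReal ((d : ℝ) * V ‖y‖) := by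
            calc (1:ℝ≥0∞) < W ‖y‖ := hy2
              _ ≤ (d : ℝ≥0∞) * ENNReal.ofReal (V ‖y‖) := hWled _
              _ = ENNReal.ofReal ((d : ℝ) * V ‖y‖) := by
                  rw [ENNReal.ofReal_mul (by positivity), ENNReal.ofReal_natCast]
          have h3 : 1 < (d : ℝ) * V ‖y‖ := ENNReal.one_lt_ofReal.mp h2
          have hcv : (d : ℝ)⁻¹ ≤ V ‖y‖ := by
            rw [inv_le_iff_one_le_mul₀ hd0]
            nlinarith
          have := key y ((d:ℝ)⁻¹) 1 (by positivity) hcv le_rfl (le_max_left _ _)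
          simpa [inv_inv, Real.one_rpow] using this
        · -- y = 0
          simp only [mem_singleton_iff] at hy0
          subst hy0
          simp
      calc (∫⁻ y in Eset 0, ENNReal.ofReal (‖y‖ ^ 2 /
            (V ‖y‖ * (max 1 (Real.log (1 / V ‖y‖))) ^ (1 + δ))) ∂μ)
          ≤ ∫⁻ y in Eset 0, ENNReal.ofReal ((d : ℝ)) * g y ∂μ :=
            setLIntegral_mono' (hEmeas 0) hptw
        _ = ENNReal.ofReal ((d : ℝ)) * ∫⁻ y in Eset 0, g y ∂μ :=
            lintegral_const_mul' _ _ ENNReal.ofReal_ne_top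
        _ ≤ ENNReal.ofReal ((d : ℝ)) * W 1 := by
            gcongr
            rw [hWint]
            apply lintegral_mono_set
            rintro y (⟨hy1, _⟩ | hy0)
            · exact hy1
            · simp only [mem_singleton_iff] at hy0; subst hy0; simp
        _ = ENNReal.ofReal (u 0) := by
            show _ = ENNReal.ofReal ((d : ℝ) * (W 1).toReal)
            rw [ENNReal.ofReal_mul (by positivity), ENNReal.ofReal_toReal hW1.ne]
    | succ m =>
      have hptw : ∀ y ∈ Eset (m + 1),
          ENNReal.ofReal (‖y‖ ^ 2 / (V ‖y‖ * (max 1 (Real.log (1 / V ‖y‖))) ^ (1 + δ)))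
            ≤ ENNReal.ofReal ((d : ℝ) * 2 ^ (m+1) / (max 1 ((m:ℝ) * Real.log 2)) ^ (1 + δ)) * g y := by
        intro y hy
        obtain ⟨hy1, hlo, hhi⟩ := hy
        have hy0 : y ≠ 0 := by
          intro h; rw [h] at hlo; simp only [norm_zero] at hlo
          rw [hW0] at hlo
          exact absurd hlo (by simp)
        have hv := hVpos _ (norm_pos_iff.mpr hy0)
        -- upper bound on V
        have hVup : V ‖y‖ ≤ ((2:ℝ) ^ m)⁻¹ := by
          have := le_trans (hVleW ‖y‖) hhi
          exact (ENNReal.ofReal_le_ofReal_iff (by positivity)).mp this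
        -- lower bound on V
        have hVlo : ((d : ℝ) * 2 ^ (m+1))⁻¹ ≤ V ‖y‖ := by
          have h2 : ENNReal.ofReal (((2:ℝ) ^ (m+1))⁻¹) < ENNReal.ofReal ((d : ℝ) * V ‖y‖) := by
            calc ENNReal.ofReal (((2:ℝ) ^ (m+1))⁻¹) < W ‖y‖ := hlo
              _ ≤ (d : ℝ≥0∞) * ENNReal.ofReal (V ‖y‖) := hWled _
              _ = ENNReal.ofReal ((d : ℝ) * V ‖y‖) := by
                  rw [ENNReal.ofReal_mul (by positivity), ENNReal.ofReal_natCast]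
          have h3 : ((2:ℝ) ^ (m+1))⁻¹ < (d : ℝ) * V ‖y‖ :=
            (ENNReal.ofReal_lt_ofReal_iff (by positivity)).mp h2
          rw [mul_inv]
          calc (d : ℝ)⁻¹ * ((2:ℝ) ^ (m+1))⁻¹ ≤ (d : ℝ)⁻¹ * ((d : ℝ) * V ‖y‖) := by
                apply mul_le_mul_of_nonneg_left h3.le (by positivity)
            _ = V ‖y‖ := by field_simp
        -- log bound
        have hlog : max 1 ((m:ℝ) * Real.log 2) ≤ max 1 (Real.log (1 / V ‖y‖)) := by
          apply max_le_max le_rfl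
          have hinv : (2:ℝ) ^ m ≤ (V ‖y‖)⁻¹ := by
            rw [le_inv_comm₀ (by positivity) hv]
            exact hVup
          calc (m:ℝ) * Real.log 2 ≤ Real.log ((V ‖y‖)⁻¹) := by
                rw [← Real.log_pow]
                exact Real.log_le_log (by positivity) hinv
            _ = Real.log (1 / V ‖y‖) := by rw [one_div]
        have := key y (((d : ℝ) * 2 ^ (m+1))⁻¹) (max 1 ((m:ℝ) * Real.log 2))
          (by positivity) hVlo (le_max_left _ _) hlog
        simpa [inv_inv] using this
      have hsub : Eset (m+1) ⊆ {y | ‖y‖ ≤ 1 ∧ W ‖y‖ ≤ ENNReal.ofReal (((2:ℝ) ^ m)⁻¹)} :=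
        fun y hy => ⟨hy.1, hy.2.2⟩
      calc (∫⁻ y in Eset (m+1), ENNReal.ofReal (‖y‖ ^ 2 /
            (V ‖y‖ * (max 1 (Real.log (1 / V ‖y‖))) ^ (1 + δ))) ∂μ)
          ≤ ∫⁻ y in Eset (m+1),
              ENNReal.ofReal ((d : ℝ) * 2 ^ (m+1) / (max 1 ((m:ℝ) * Real.log 2)) ^ (1 + δ)) * g y ∂μ :=
            setLIntegral_mono' (hEmeas (m+1)) hptw
        _ = ENNReal.ofReal ((d : ℝ) * 2 ^ (m+1) / (max 1 ((m:ℝ) * Real.log 2)) ^ (1 + δ)) *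
              ∫⁻ y in Eset (m+1), g y ∂μ :=
            lintegral_const_mul' _ _ ENNReal.ofReal_ne_top
        _ ≤ ENNReal.ofReal ((d : ℝ) * 2 ^ (m+1) / (max 1 ((m:ℝ) * Real.log 2)) ^ (1 + δ)) *
              ENNReal.ofReal (((2:ℝ) ^ m)⁻¹) := by
            gcongr
            rw [← withDensity_apply g (hEmeas (m+1))]
            exact le_trans (measure_mono hsub) (haux _)
        _ = ENNReal.ofReal (u (m+1)) := by
            rw [← ENNReal.ofReal_mul (by positivity)]
            show _ = ENNReal.ofReal (2 * (d : ℝ) / (max 1 ((m:ℝ) * Real.log 2)) ^ (1 + δ))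
            congr 1
            have hM : (0:ℝ) < (max 1 ((m:ℝ) * Real.log 2)) ^ (1 + δ) :=
              Real.rpow_pos_of_pos (lt_of_lt_of_le one_pos (le_max_left _ _)) _
            have h2 : (0:ℝ) < (2:ℝ) ^ m := by positivity
            field_simp
            ring
  -- summability of u
  have hlog2pos : (0:ℝ) < Real.log 2 := Real.log_pos (by norm_num)
  have hlog2le : Real.log 2 ≤ 1 := by
    have := Real.log_le_sub_one_of_pos (by norm_num : (0:ℝ) < 2)
    linarith
  have husum : Summable u := by
    rw [← summable_nat_add_iff 1]
    have hKpos : (0:ℝ) < (Real.log 2 / 2) ^ (1 + δ) :=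
      Real.rpow_pos_of_pos (by positivity) _
    set K : ℝ := 2 * (d : ℝ) / (Real.log 2 / 2) ^ (1 + δ) with hK
    have hcomp : ∀ n : ℕ, u (n + 1) ≤ K * ((((n:ℝ) + 1)) ^ (1 + δ))⁻¹ := by
      intro n
      have hM1 : (0:ℝ) < max 1 ((n:ℝ) * Real.log 2) :=
        lt_of_lt_of_le one_pos (le_max_left _ _)
      have hMlb : Real.log 2 / 2 * ((n:ℝ) + 1) ≤ max 1 ((n:ℝ) * Real.log 2) := by
        rcases Nat.eq_zero_or_pos n with rfl | hn
        · simp only [Nat.cast_zero, zero_add, mul_one]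
          calc Real.log 2 / 2 ≤ 1 := by linarith
            _ ≤ max 1 _ := le_max_left _ _
        · have hn1 : (1:ℝ) ≤ (n:ℝ) := by exact_mod_cast hn
          calc Real.log 2 / 2 * ((n:ℝ) + 1) ≤ (n:ℝ) * Real.log 2 := by nlinarith
            _ ≤ max 1 _ := le_max_right _ _
      have hnp : (0:ℝ) < (n:ℝ) + 1 := by positivity
      have hpowle : (Real.log 2 / 2) ^ (1 + δ) * ((n:ℝ) + 1) ^ (1 + δ) ≤
          (max 1 ((n:ℝ) * Real.log 2)) ^ (1 + δ) := by
        rw [← Real.mul_rpow (by positivity) (by positivity)]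
        exact Real.rpow_le_rpow (by positivity) hMlb (by linarith)
      have hnpow : (0:ℝ) < ((n:ℝ) + 1) ^ (1 + δ) := Real.rpow_pos_of_pos hnp _
      have hrhs : K * ((((n:ℝ) + 1)) ^ (1 + δ))⁻¹ =
          2 * (d : ℝ) / ((Real.log 2 / 2) ^ (1 + δ) * ((n:ℝ) + 1) ^ (1 + δ)) := by
        rw [hK]; field_simp
      show 2 * (d : ℝ) / (max 1 ((n:ℝ) * Real.log 2)) ^ (1 + δ) ≤ _
      rw [hrhs]
      exact div_le_div_of_nonneg_left (by positivity) (mul_pos hKpos hnpow) hpowle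
    have hbase : Summable (fun n : ℕ => K * ((((n:ℝ) + 1)) ^ (1 + δ))⁻¹) := by
      apply Summable.mul_left
      have h1 : Summable (fun n : ℕ => (((n:ℝ)) ^ (1 + δ))⁻¹) :=
        Real.summable_nat_rpow_inv.mpr (by linarith)
      have h2 := (summable_nat_add_iff 1).mpr h1
      convert h2 using 2 with n
      · rfl
      push_cast
      ring_nf
    exact Summable.of_nonneg_of_le (fun n => hu0 (n+1)) hcomp hbase
  -- conclusion
  calc (∫⁻ y in {y : EuclideanSpace ℝ (Fin d) | ‖y‖ ≤ 1},
        ENNReal.ofReal (‖y‖ ^ 2 /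
          (V ‖y‖ * (max 1 (Real.log (1 / V ‖y‖))) ^ (1 + δ))) ∂μ)
      ≤ ∫⁻ y in ⋃ n, Eset n, ENNReal.ofReal (‖y‖ ^ 2 /
          (V ‖y‖ * (max 1 (Real.log (1 / V ‖y‖))) ^ (1 + δ))) ∂μ := lintegral_mono_set hcover
    _ ≤ ∑' n, ∫⁻ y in Eset n, ENNReal.ofReal (‖y‖ ^ 2 /
          (V ‖y‖ * (max 1 (Real.log (1 / V ‖y‖))) ^ (1 + δ))) ∂μ := lintegral_iUnion_le _ _
    _ ≤ ∑' n, ENNReal.ofReal (u n) := ENNReal.tsum_le_tsum hterm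
    _ = ENNReal.ofReal (∑' n, u n) := (ENNReal.ofReal_tsum_of_nonneg hu0 husum).symm
    _ < ⊤ := ENNReal.ofReal_lt_top
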